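/- In the 2-LCCP model with n coupons, the minimal possible number of samples until complete recovery equals ⌈2n/3⌉. -/

import Mathlib

/-- The auxiliary coupon graph of the 2-LCCP model: two coupons are adjacent iff the
pair was sampled together. -/
def sampleGraph {n : ℕ} (S : Set (Finset (Fin n))) : SimpleGraph (Fin n) where
  Adj a b := a ≠ b ∧ ({a, b} : Finset (Fin n)) ∈ S
  symm := by
    constructor
    intro a b h
    exact ⟨h.1.symm, by rw [Finset.pair_comm]; exact h.2⟩
  loopless := by constructor; intro a h; exact h.1 rfl

open SimpleGraph in
/-- Descent lemma: a vertex at positive distance from `r` has a neighbor strictly closer. -/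
lemma exists_adj_dist_lt' {V : Type*} {G : SimpleGraph V} {v r : V} (hne : v ≠ r)
    (hr : G.Reachable v r) : ∃ u, G.Adj v u ∧ G.dist u r < G.dist v r := by
  obtain ⟨p, hp⟩ := hr.exists_walk_length_eq_dist
  cases p with
  | nil => exact absurd rfl hne
  | @cons _ u _ h q =>
      refine ⟨u, h, ?_⟩
      calc G.dist u r ≤ q.length := SimpleGraph.dist_le q
        _ < (SimpleGraph.Walk.cons h q).length := by
            rw [SimpleGraph.Walk.length_cons]; omega
        _ = G.dist v r := hp

open SimpleGraph in
/-- Lower bound: any sample family with all components of size `≥ 3` has at least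
`⌈2n/3⌉` samples. -/
lemma two_LCCP_lower {n t : ℕ} (hn : 3 ≤ n) (g : Fin t → Finset (Fin n))
    (hsupp : ∀ v : Fin n,
      3 ≤ ((sampleGraph (Set.range g)).connectedComponentMk v).supp.ncard) :
    (2 * n + 2) / 3 ≤ t := by
  classical
  set G := sampleGraph (Set.range g) with hGdef
  haveI : Fintype G.ConnectedComponent :=
    Fintype.ofSurjective G.connectedComponentMk (fun C => C.exists_rep)
  set c := Fintype.card G.ConnectedComponent with hc
  -- every component has at least 3 vertices
  have hC : ∀ C : G.ConnectedComponent, 3 ≤ C.supp.ncard := by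
    intro C
    obtain ⟨v, hv⟩ := C.exists_rep
    rw [← hv]
    exact hsupp v
  -- the supports partition the vertex set
  have hsum : ∑ C : G.ConnectedComponent, C.supp.ncard = n := by
    have h1 : ∀ C : G.ConnectedComponent,
        C.supp.ncard = (Finset.univ.filter fun v => G.connectedComponentMk v = C).card := by
      intro C
      rw [Set.ncard_eq_toFinset_card']
      congr 1
      ext v
      simp [ConnectedComponent.mem_supp_iff]
    simp_rw [h1]
    rw [← Finset.card_eq_sum_card_fiberwise
      (f := G.connectedComponentMk) (t := Finset.univ) (fun v _ => Finset.mem_univ _)]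
    simp
  have h3c : 3 * c ≤ n := by
    calc 3 * c = ∑ _C : G.ConnectedComponent, 3 := by
          rw [Finset.sum_const, Finset.card_univ, smul_eq_mul, mul_comm]
      _ ≤ ∑ C : G.ConnectedComponent, C.supp.ncard := Finset.sum_le_sum fun C _ => hC C
      _ = n := hsum
  -- representatives of components
  have hrep : ∀ v : Fin n,
      G.connectedComponentMk ((G.connectedComponentMk v).out) = G.connectedComponentMk v :=
    fun v => (G.connectedComponentMk v).out_eq
  have key : ∀ v : Fin n, v ≠ (G.connectedComponentMk v).out → ∃ (i : Fin t) (u : Fin n),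
      g i = {v, u} ∧ G.connectedComponentMk u = G.connectedComponentMk v ∧
      G.dist u (G.connectedComponentMk v).out < G.dist v (G.connectedComponentMk v).out := by
    intro v hv
    have hr : G.Reachable v (G.connectedComponentMk v).out :=
      (ConnectedComponent.exact (hrep v)).symm
    obtain ⟨u, hadj, hdist⟩ := exists_adj_dist_lt' hv hr
    have hcc := (ConnectedComponent.sound hadj.reachable).symm
    obtain ⟨hne, j, hj⟩ := hadj
    exact ⟨j, u, hj, hcc, hdist⟩
  choose iF uF hgi hmkeq hdist using key
  -- injective map into Fin t ⊕ components
  have hinj : Function.Injective (fun v : Fin n =>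
      if h : v = (G.connectedComponentMk v).out then
        (Sum.inr (G.connectedComponentMk v) : Fin t ⊕ G.ConnectedComponent)
      else Sum.inl (iF v h)) := by
    intro v w h
    simp only at h
    by_cases hv : v = (G.connectedComponentMk v).out <;>
      by_cases hw : w = (G.connectedComponentMk w).out
    · rw [dif_pos hv, dif_pos hw] at h
      have h2 : G.connectedComponentMk v = G.connectedComponentMk w := Sum.inr.inj h
      rw [hv, hw, h2]
    · rw [dif_pos hv, dif_neg hw] at h; exact absurd h (by simp)
    · rw [dif_neg hv, dif_pos hw] at h; exact absurd h (by simp)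
    · rw [dif_neg hv, dif_neg hw] at h
      have hi : iF v hv = iF w hw := Sum.inl.inj h
      have hgv := hgi v hv
      have hgw := hgi w hw
      rw [hi, hgw] at hgv
      -- hgv : {w, uF w hw} = {v, uF v hv}
      by_contra hne
      have hv1 : v = uF w hw := by
        have hm : v ∈ ({w, uF w hw} : Finset (Fin n)) := by
          rw [hgv]; exact Finset.mem_insert_self v _
        rcases Finset.mem_insert.mp hm with h' | h'
        · exact absurd h' hne
        · exact Finset.mem_singleton.mp h'
      have hw1 : w = uF v hv := by
        have hm : w ∈ ({v, uF v hv} : Finset (Fin n)) := by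
          rw [← hgv]; exact Finset.mem_insert_self w _
        rcases Finset.mem_insert.mp hm with h' | h'
        · exact absurd h'.symm hne
        · exact Finset.mem_singleton.mp h'
      have hcc : G.connectedComponentMk v = G.connectedComponentMk w := by
        rw [hv1]; exact hmkeq w hw
      have d1 := hdist v hv
      have d2 := hdist w hw
      rw [← hw1] at d1
      rw [← hv1, ← hcc] at d2
      omega
  have hcard := Fintype.card_le_of_injective _ hinj
  simp only [Fintype.card_fin, Fintype.card_sum] at hcard
  omega

/-- In the 2-LCCP model with `n ≥ 3` coupons, complete recovery happens exactly when
every coupon lies in a component of size `≥ 3` of the auxiliary graph of sampled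
pairs; the minimal possible number of samples achieving this is `⌈2n/3⌉`
(written `(2*n+2)/3` in natural division). -/
theorem two_LCCP_min_samples (n : ℕ) (hn : 3 ≤ n) :
    IsLeast {t : ℕ | ∃ g : Fin t → Finset (Fin n),
        (∀ i, (g i).card = 2) ∧
        (∀ v : Fin n,
          3 ≤ ((sampleGraph (Set.range g)).connectedComponentMk v).supp.ncard)}
      ((2 * n + 2) / 3) := by
  constructor
  · -- membership: explicit construction (disjoint paths on blocks of size 3, the
    -- last block absorbing the remainder)
    refine ⟨fun i => {⟨i.1 + min (i.1 / 2) (n / 3 - 1), by have := i.isLt; omega⟩,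
        ⟨i.1 + min (i.1 / 2) (n / 3 - 1) + 1, by have := i.isLt; omega⟩},
      ?_, ?_⟩
    · intro i
      exact Finset.card_pair (by simp [Fin.ext_iff])
    set g : Fin ((2 * n + 2) / 3) → Finset (Fin n) := fun i =>
      {⟨i.1 + min (i.1 / 2) (n / 3 - 1), by have := i.isLt; omega⟩,
       ⟨i.1 + min (i.1 / 2) (n / 3 - 1) + 1, by have := i.isLt; omega⟩} with hgdef
    set G := sampleGraph (Set.range g) with hGdef
    -- consecutive vertices are adjacent when not at a block boundary
    have adj : ∀ w : ℕ, ∀ hw1 : w + 1 < n, (w % 3 < 2 ∨ 3 * (n / 3 - 1) ≤ w) →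
        G.Adj ⟨w, by omega⟩ ⟨w + 1, hw1⟩ := by
      intro w hw1 hc
      refine ⟨by simp [Fin.ext_iff], ⟨⟨w - min (w / 3) (n / 3 - 1), by omega⟩, ?_⟩⟩
      have hp : (w - min (w / 3) (n / 3 - 1)) +
          min ((w - min (w / 3) (n / 3 - 1)) / 2) (n / 3 - 1) = w := by omega
      rw [hgdef]
      ext x
      simp only [Finset.mem_insert, Finset.mem_singleton, Fin.ext_iff]
      omega
    -- every vertex is reachable from the base of its block
    have hreach : ∀ w : ℕ, ∀ hw : w < n,
        G.Reachable ⟨3 * min (w / 3) (n / 3 - 1), by omega⟩ ⟨w, hw⟩ := by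
      intro w
      induction w with
      | zero =>
          intro hw
          have e : (⟨3 * min (0 / 3) (n / 3 - 1), by omega⟩ : Fin n) = ⟨0, hw⟩ := by
            simp [Fin.ext_iff]
          rw [e]
      | succ w ih =>
          intro hw
          by_cases hb : 3 * min ((w + 1) / 3) (n / 3 - 1) = w + 1
          · have e : (⟨3 * min ((w + 1) / 3) (n / 3 - 1), by omega⟩ : Fin n)
                = ⟨w + 1, hw⟩ := by simp [Fin.ext_iff, hb]
            rw [e]
          · have h1 : 3 * min ((w + 1) / 3) (n / 3 - 1) = 3 * min (w / 3) (n / 3 - 1) := by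
              omega
            have hcond : w % 3 < 2 ∨ 3 * (n / 3 - 1) ≤ w := by omega
            have hadj : G.Adj ⟨w, by omega⟩ ⟨w + 1, hw⟩ := adj w hw hcond
            have e : (⟨3 * min ((w + 1) / 3) (n / 3 - 1), by omega⟩ : Fin n)
                = ⟨3 * min (w / 3) (n / 3 - 1), by omega⟩ := by simp [Fin.ext_iff, h1]
            rw [e]
            exact (ih (by omega)).trans hadj.reachable
    intro v
    set b := 3 * min (v.1 / 3) (n / 3 - 1) with hbdef
    have hb2 : b + 2 < n := by
      have := v.isLt
      omega
    have r0 : G.Reachable ⟨b, by omega⟩ v := by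
      have h := hreach v.1 v.isLt
      simpa using h
    have adj01 : G.Adj ⟨b, by omega⟩ ⟨b + 1, by omega⟩ := adj b (by omega) (by omega)
    have adj12 : G.Adj ⟨b + 1, by omega⟩ ⟨b + 2, by omega⟩ :=
      adj (b + 1) (by omega) (by omega)
    have r1 : G.Reachable ⟨b + 1, by omega⟩ v := (adj01.symm.reachable).trans r0
    have r2 : G.Reachable ⟨b + 2, by omega⟩ v :=
      (adj12.symm.reachable).trans r1
    have hsub : ({⟨b, by omega⟩, ⟨b + 1, by omega⟩, ⟨b + 2, by omega⟩} : Set (Fin n)) ⊆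
        (G.connectedComponentMk v).supp := by
      intro x hx
      rcases hx with rfl | rfl | rfl
      · exact (SimpleGraph.ConnectedComponent.mem_supp_iff _ _).mpr
          (SimpleGraph.ConnectedComponent.eq.mpr r0)
      · exact (SimpleGraph.ConnectedComponent.mem_supp_iff _ _).mpr
          (SimpleGraph.ConnectedComponent.eq.mpr r1)
      · exact (SimpleGraph.ConnectedComponent.mem_supp_iff _ _).mpr
          (SimpleGraph.ConnectedComponent.eq.mpr r2)
    calc 3 = ({⟨b, by omega⟩, ⟨b + 1, by omega⟩, ⟨b + 2, by omega⟩} : Set (Fin n)).ncard := by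
          refine (Set.ncard_eq_three.mpr ⟨_, _, _, ?_, ?_, ?_, rfl⟩).symm <;>
            simp [Fin.ext_iff]
      _ ≤ (G.connectedComponentMk v).supp.ncard :=
          Set.ncard_le_ncard hsub (Set.toFinite _)
  · rintro t ⟨g, _, hs⟩
    exact two_LCCP_lower hn g hs
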